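/- For all $b > 0$, $-\frac{1}{2b}B(b+\tfrac12, \tfrac12) < \frac{\partial}{\partial x}B(b+\tfrac12, \tfrac12) < -\frac{1}{2b+1}B(b+\tfrac12, \tfrac12)$, where the derivative of the Beta function $B(x, 1/2)$ is taken with respect to its first argument at $x = b + 1/2$. -/

import Mathlib

open MeasureTheory

noncomputable def betaReal (x y : ℝ) : ℝ :=
  ∫ t in (0:ℝ)..1, t ^ (x - 1) * (1 - t) ^ (y - 1)

open Real Set

noncomputable def wfun (t : ℝ) : ℝ := (1 - t) ^ (-(1/2) : ℝ)

lemma wfun_nonneg {t : ℝ} (ht : t ≤ 1) : 0 ≤ wfun t :=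
  Real.rpow_nonneg (by linarith) _


-- (wfun defined above)

lemma wfun_meas : Measurable wfun := by unfold wfun; fun_prop

lemma wfun_pos {t : ℝ} (ht : t < 1) : 0 < wfun t :=
  Real.rpow_pos_of_pos (by linarith) _

lemma wfun_one_le {t : ℝ} (ht0 : 0 ≤ t) (ht : t < 1) : 1 ≤ wfun t :=
  Real.one_le_rpow_of_pos_of_le_one_of_nonpos (by linarith) (by linarith) (by norm_num)

lemma wfun_le_sqrt2 {t : ℝ} (ht : t ≤ 1/2) : wfun t ≤ Real.sqrt 2 := by
  have h : (1 - t) ^ (-(1/2) : ℝ) ≤ ((1:ℝ)/2) ^ (-(1/2) : ℝ) :=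
    Real.rpow_le_rpow_of_nonpos (by norm_num) (by linarith) (by norm_num)
  have h2 : ((1:ℝ)/2) ^ (-(1/2) : ℝ) = Real.sqrt 2 := by
    rw [Real.rpow_neg (by norm_num), Real.sqrt_eq_rpow, ← Real.inv_rpow (by norm_num)]
    norm_num
  rw [wfun]; linarith

lemma wfun_integrableOn : IntegrableOn wfun (Ioc (1/2 : ℝ) 1) := by
  have h : IntervalIntegrable (fun u : ℝ => u ^ (-(1/2) : ℝ)) volume 0 (1/2) :=
    intervalIntegral.intervalIntegrable_rpow' (by norm_num)
  have h2 := h.comp_sub_left 1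
  norm_num only at h2
  rw [← intervalIntegrable_iff_integrableOn_Ioc_of_le (by norm_num)]
  exact h2.symm

lemma abs_log_le {t c : ℝ} (ht0 : 0 < t) (ht1 : t ≤ 1) (hc : 0 < c) :
    |Real.log t| ≤ (2/c) * t ^ (-(c/2)) := by
  have hlt : Real.log t ≤ 0 := Real.log_nonpos ht0.le ht1
  rw [abs_of_nonpos hlt]
  have h1 : Real.log (t ^ (-(c/2))) = -(c/2) * Real.log t := Real.log_rpow ht0 _
  have h2 : Real.log (t ^ (-(c/2))) ≤ t ^ (-(c/2)) - 1 :=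
    Real.log_le_sub_one_of_pos (Real.rpow_pos_of_pos ht0 _)
  have h3 : (0:ℝ) < t ^ (-(c/2)) := Real.rpow_pos_of_pos ht0 _
  have h4 : -(c/2) * Real.log t ≤ t ^ (-(c/2)) := by linarith
  have h5 : -Real.log t = (2/c) * (-(c/2) * Real.log t) := by field_simp
  rw [h5]
  exact mul_le_mul_of_nonneg_left h4 (by positivity)

lemma rpow_le_max {t c : ℝ} (ht0 : 1/2 ≤ t) (ht1 : t ≤ 1) :
    t ^ (c-1) ≤ max 1 ((1/2:ℝ) ^ (c-1)) := by
  rcases le_or_gt 0 (c-1) with h | h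
  · exact le_max_of_le_left (Real.rpow_le_one (by linarith) ht1 h)
  · exact le_max_of_le_right (Real.rpow_le_rpow_of_nonpos (by norm_num) ht0 h.le)

/-- plain integrability -/
lemma base_int {c : ℝ} (hc : 0 < c) :
    IntegrableOn (fun t : ℝ => t ^ (c-1) * wfun t) (Ioc 0 1) := by
  have hmeas : Measurable fun t : ℝ => t ^ (c-1) * wfun t := by unfold wfun; fun_prop
  have hsplit : Ioc (0:ℝ) (1/2) ∪ Ioc (1/2:ℝ) 1 = Ioc (0:ℝ) 1 :=
    Ioc_union_Ioc_eq_Ioc (by norm_num) (by norm_num)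
  rw [← hsplit]
  apply IntegrableOn.union
  · -- near 0 : t^(c-1) integrable, wfun bounded
    have h1 : IntegrableOn (fun t : ℝ => t ^ (c-1)) (Ioc 0 (1/2)) := by
      rw [← intervalIntegrable_iff_integrableOn_Ioc_of_le (by norm_num)]
      exact intervalIntegral.intervalIntegrable_rpow' (by linarith)
    have h2 : IntegrableOn (fun t : ℝ => wfun t * t ^ (c-1)) (Ioc 0 (1/2)) := by
      apply h1.bdd_mul (c := Real.sqrt 2) (wfun_meas.aestronglyMeasurable)
      rw [ae_restrict_iff' measurableSet_Ioc]
      refine ae_of_all _ fun t ht => ?_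
      rw [Real.norm_eq_abs, abs_of_nonneg (wfun_pos (by linarith [ht.2])).le]
      exact wfun_le_sqrt2 ht.2
    exact h2.congr (ae_of_all _ fun t => mul_comm _ _)
  · -- near 1 : wfun integrable, t^(c-1) bounded
    have h2 : IntegrableOn (fun t : ℝ => t ^ (c-1) * wfun t) (Ioc (1/2) 1) := by
      apply wfun_integrableOn.bdd_mul (c := max 1 ((1/2:ℝ) ^ (c-1)))
        ((by fun_prop : Measurable fun t:ℝ => t ^ (c-1)).aestronglyMeasurable)
      rw [ae_restrict_iff' measurableSet_Ioc]
      refine ae_of_all _ fun t ht => ?_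
      rw [Real.norm_eq_abs, abs_of_nonneg (Real.rpow_nonneg (by linarith [ht.1]) _)]
      exact rpow_le_max ht.1.le ht.2
    exact h2

/-- integrability with |log| -/
lemma abs_log_int {c : ℝ} (hc : 0 < c) :
    IntegrableOn (fun t : ℝ => t ^ (c-1) * wfun t * |Real.log t|) (Ioc 0 1) := by
  have hmeas : Measurable fun t : ℝ => t ^ (c-1) * wfun t * |Real.log t| := by
    unfold wfun
    exact ((by fun_prop : Measurable fun t:ℝ => t ^ (c-1) * (1-t) ^ (-(1/2):ℝ)).mul
      Real.measurable_log.abs)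
  have hsplit : Ioc (0:ℝ) (1/2) ∪ Ioc (1/2:ℝ) 1 = Ioc (0:ℝ) 1 :=
    Ioc_union_Ioc_eq_Ioc (by norm_num) (by norm_num)
  rw [← hsplit]
  apply IntegrableOn.union
  · -- dominate by (2/c) * t^(c/2-1) * wfun t
    have hg : IntegrableOn (fun t : ℝ => (2/c) * (t ^ (c/2-1) * wfun t)) (Ioc 0 (1/2)) :=
      (((base_int (by linarith : (0:ℝ) < c/2)).mono_set
        (Ioc_subset_Ioc_right (by norm_num))).const_mul _)
    apply hg.mono' hmeas.aestronglyMeasurable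
    rw [ae_restrict_iff' measurableSet_Ioc]
    refine ae_of_all _ fun t ht => ?_
    have ht0 : 0 < t := ht.1
    have ht1 : t < 1 := by linarith [ht.2]
    have hw : 0 < wfun t := wfun_pos ht1
    have htp : 0 < t ^ (c-1) := Real.rpow_pos_of_pos ht0 _
    rw [Real.norm_eq_abs, abs_of_nonneg (by positivity)]
    have hlog := abs_log_le ht0 ht1.le hc
    have hkey : t ^ (c-1) * t ^ (-(c/2)) = t ^ (c/2-1) := by
      rw [← Real.rpow_add ht0]; congr 1; ring
    calc t ^ (c-1) * wfun t * |Real.log t|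
        ≤ t ^ (c-1) * wfun t * ((2/c) * t ^ (-(c/2))) := by
          apply mul_le_mul_of_nonneg_left hlog (by positivity)
      _ = 2/c * ((t ^ (c-1) * t ^ (-(c/2))) * wfun t) := by ring
      _ = 2/c * (t ^ (c/2-1) * wfun t) := by rw [hkey]
  · -- bounded by M * log 2 times wfun
    have hf : Measurable fun t : ℝ => t ^ (c-1) * |Real.log t| :=
      (by fun_prop : Measurable fun t:ℝ => t ^ (c-1)).mul Real.measurable_log.abs
    have h2 : IntegrableOn (fun t : ℝ => (t ^ (c-1) * |Real.log t|) * wfun t) (Ioc (1/2) 1) := by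
      apply wfun_integrableOn.bdd_mul (c := max 1 ((1/2:ℝ) ^ (c-1)) * Real.log 2)
        hf.aestronglyMeasurable
      rw [ae_restrict_iff' measurableSet_Ioc]
      refine ae_of_all _ fun t ht => ?_
      have htpos : (0:ℝ) < t := by linarith [ht.1]
      rw [Real.norm_eq_abs, abs_mul, abs_abs, abs_of_nonneg (Real.rpow_nonneg htpos.le _)]
      have h1 : t ^ (c-1) ≤ max 1 ((1/2:ℝ) ^ (c-1)) := rpow_le_max ht.1.le ht.2
      have hlg : |Real.log t| ≤ Real.log 2 := by
        rw [abs_of_nonpos (Real.log_nonpos htpos.le ht.2), ← Real.log_inv]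
        apply Real.log_le_log (by positivity)
        have : t⁻¹ ≤ (1/2:ℝ)⁻¹ := inv_anti₀ (by norm_num) (by linarith [ht.1])
        simpa using this
      exact mul_le_mul h1 hlg (abs_nonneg _) (le_max_of_le_left zero_le_one)
    exact h2.congr (ae_of_all _ fun t => by ring)



noncomputable def Bfun (x : ℝ) : ℝ := ∫ t in Ioc (0:ℝ) 1, t ^ (x-1) * wfun t
noncomputable def Lfun (x : ℝ) : ℝ := ∫ t in Ioc (0:ℝ) 1, t ^ (x-1) * wfun t * Real.log t

lemma log_meas (c : ℝ) : Measurable fun t : ℝ => t ^ (c-1) * wfun t * Real.log t := by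
  unfold wfun
  exact (by fun_prop : Measurable fun t:ℝ => t ^ (c-1) * (1-t) ^ (-(1/2):ℝ)).mul
    Real.measurable_log

lemma log_int {c : ℝ} (hc : 0 < c) :
    IntegrableOn (fun t : ℝ => t ^ (c-1) * wfun t * Real.log t) (Ioc 0 1) := by
  apply (abs_log_int hc).mono' (log_meas c).aestronglyMeasurable
  rw [ae_restrict_iff' measurableSet_Ioc]
  refine ae_of_all _ fun t ht => ?_
  have h1 : 0 ≤ t ^ (c-1) * wfun t :=
    mul_nonneg (Real.rpow_nonneg ht.1.le _) (wfun_nonneg ht.2)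
  rw [Real.norm_eq_abs, abs_mul, abs_of_nonneg h1]

lemma betaReal_eq (x : ℝ) : betaReal x (1/2) = Bfun x := by
  rw [betaReal, intervalIntegral.integral_of_le zero_le_one, Bfun]
  congr 1
  funext t
  rw [wfun, show (1/2:ℝ) - 1 = -(1/2) by norm_num]

lemma Bfun_pos {x : ℝ} (hx : 0 < x) : 0 < Bfun x := by
  have hint : IntervalIntegrable (fun t : ℝ => t ^ (x-1) * wfun t) volume 0 1 := by
    rw [intervalIntegrable_iff_integrableOn_Ioc_of_le zero_le_one]; exact base_int hx
  have := intervalIntegral.intervalIntegral_pos_of_pos_on hint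
    (fun t ht => mul_pos (Real.rpow_pos_of_pos ht.1 _) (wfun_pos ht.2)) zero_lt_one
  rwa [intervalIntegral.integral_of_le zero_le_one] at this

lemma hasDerivAt_Bfun {x : ℝ} (hx : 0 < x) : HasDerivAt Bfun (Lfun x) x := by
  have key := hasDerivAt_integral_of_dominated_loc_of_deriv_le
    (F := fun y t => t ^ (y-1) * wfun t)
    (F' := fun y t => t ^ (y-1) * wfun t * Real.log t)
    (μ := volume.restrict (Ioc (0:ℝ) 1)) (x₀ := x)
    (bound := fun t => t ^ (x/2-1) * wfun t * |Real.log t|)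
    (Metric.ball_mem_nhds x (half_pos hx))
    (Filter.Eventually.of_forall fun y =>
      ((by unfold wfun; fun_prop : Measurable fun t:ℝ => t ^ (y-1) * wfun t)).aestronglyMeasurable)
    (base_int hx)
    ((log_meas x).aestronglyMeasurable)
    ?_ (abs_log_int (by linarith : (0:ℝ) < x/2)) ?_
  · exact key.2
  · -- bound
    rw [ae_restrict_iff' measurableSet_Ioc]
    refine ae_of_all _ fun t ht y hy => ?_
    have ht0 : 0 < t := ht.1
    have hw : 0 ≤ wfun t := wfun_nonneg ht.2
    rw [Real.norm_eq_abs, abs_mul, abs_mul, abs_of_nonneg (Real.rpow_nonneg ht0.le _),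
      abs_of_nonneg hw]
    have hy2 : x/2 - 1 ≤ y - 1 := by
      rw [Metric.mem_ball, Real.dist_eq, abs_lt] at hy; linarith [hy.1]
    have := Real.rpow_le_rpow_of_exponent_ge ht0 ht.2 hy2
    exact mul_le_mul_of_nonneg_right (mul_le_mul_of_nonneg_right this hw) (abs_nonneg _)
  · -- differentiability
    rw [ae_restrict_iff' measurableSet_Ioc]
    refine ae_of_all _ fun t ht y _ => ?_
    have ht0 : 0 < t := ht.1
    have h0 : HasDerivAt (fun y : ℝ => (y-1) * Real.log t) (Real.log t) y := by
      simpa using ((hasDerivAt_id y).sub_const 1).mul_const (Real.log t)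
    have hexp := h0.exp
    have hfe : (fun y : ℝ => t ^ (y-1)) = fun y : ℝ => Real.exp ((y-1) * Real.log t) := by
      funext y; rw [Real.rpow_def_of_pos ht0, mul_comm]
    have h1 : HasDerivAt (fun y : ℝ => t ^ (y-1)) (t ^ (y-1) * Real.log t) y := by
      rw [hfe]
      convert hexp using 1
      rw [Real.rpow_def_of_pos ht0]; ring
    have := h1.mul_const (wfun t)
    convert this using 1
    · rfl
    ring

lemma deriv_beta {x : ℝ} (hx : 0 < x) :
    deriv (fun x : ℝ => betaReal x (1/2)) x = Lfun x := by
  have : (fun x : ℝ => betaReal x (1/2)) = Bfun := funext betaReal_eq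
  rw [this]
  exact (hasDerivAt_Bfun hx).deriv


lemma beta_complex (x y : ℝ) : Complex.betaIntegral x y = (betaReal x y : ℂ) := by
  rw [Complex.betaIntegral, betaReal, ← intervalIntegral.integral_ofReal]
  apply intervalIntegral.integral_congr
  intro t ht
  rw [uIcc_of_le zero_le_one] at ht
  show (t:ℂ) ^ ((x:ℂ)-1) * ((1:ℂ)-(t:ℂ)) ^ ((y:ℂ)-1) = ((t ^ (x-1) * (1-t) ^ (y-1) : ℝ) : ℂ)
  rw [Complex.ofReal_mul, Complex.ofReal_cpow ht.1, Complex.ofReal_cpow (by linarith [ht.2] : (0:ℝ) ≤ 1 - t)]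
  push_cast
  ring

lemma Bfun_gamma {x : ℝ} (hx : 0 < x) :
    Real.Gamma x * Real.Gamma (1/2) = Real.Gamma (x + 1/2) * Bfun x := by
  have h := Complex.Gamma_mul_Gamma_eq_betaIntegral
    (s := (x:ℂ)) (t := ((1/2 : ℝ) : ℂ)) (by simpa using hx) (by norm_num)
  rw [beta_complex, betaReal_eq, ← Complex.ofReal_add, Complex.Gamma_ofReal,
    Complex.Gamma_ofReal, Complex.Gamma_ofReal] at h
  exact_mod_cast h

lemma prod_identity {x : ℝ} (hx : 0 < x) : Bfun x * Bfun (x + 1/2) = Real.pi / x := by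
  have h1 := Bfun_gamma hx
  have h2 := Bfun_gamma (show 0 < x + 1/2 by linarith)
  rw [show x + 1/2 + 1/2 = x + 1 by ring] at h2
  have hΓx : 0 < Real.Gamma x := Real.Gamma_pos_of_pos hx
  have hΓh : 0 < Real.Gamma (x + 1/2) := Real.Gamma_pos_of_pos (by linarith)
  have hadd : Real.Gamma (x + 1) = x * Real.Gamma x := by
    rw [Real.Gamma_add_one hx.ne']
  have hhalf : Real.Gamma (1/2 : ℝ) = Real.sqrt Real.pi := Real.Gamma_one_half_eq
  have hsq : Real.sqrt Real.pi * Real.sqrt Real.pi = Real.pi :=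
    Real.mul_self_sqrt Real.pi_pos.le
  have hΓ1 : 0 < Real.Gamma (x + 1) := Real.Gamma_pos_of_pos (by linarith)
  have e1 : Bfun x = Real.Gamma x * Real.Gamma (1/2) / Real.Gamma (x + 1/2) := by
    rw [eq_div_iff hΓh.ne']; linear_combination -h1
  have e2 : Bfun (x + 1/2) = Real.Gamma (x + 1/2) * Real.Gamma (1/2) / Real.Gamma (x + 1) := by
    rw [eq_div_iff hΓ1.ne']; linear_combination -h2
  rw [e1, e2, hhalf, hadd]
  rw [div_mul_div_comm, div_eq_div_iff (by positivity) (by positivity)]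
  linear_combination (Real.Gamma x * Real.Gamma (x+1/2) * x) * hsq

lemma sum_identity {x : ℝ} (hx : 0 < x) :
    Lfun x * Bfun (x+1/2) + Bfun x * Lfun (x+1/2) = -(Real.pi / x^2) := by
  have hB1 : HasDerivAt Bfun (Lfun x) x := hasDerivAt_Bfun hx
  have hshift : HasDerivAt (fun y => Bfun (y+1/2)) (Lfun (x+1/2)) x := by
    have h := hasDerivAt_Bfun (show 0 < x+1/2 by linarith)
    have h2 := h.comp x ((hasDerivAt_id x).add_const (1/2))
    simpa [Function.comp_def] using h2
  have hprod := hB1.mul hshift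
  have hg : HasDerivAt (fun y : ℝ => Real.pi / y) (-(Real.pi / x^2)) x := by
    have h := (hasDerivAt_inv hx.ne').const_mul Real.pi
    have : -(Real.pi / x^2) = Real.pi * -(x^2)⁻¹ := by field_simp
    rw [this]
    simpa [div_eq_mul_inv] using h
  have hev : (fun y => Bfun y * Bfun (y+1/2)) =ᶠ[nhds x] (fun y : ℝ => Real.pi / y) :=
    Filter.eventually_of_mem (isOpen_Ioi.mem_nhds hx) fun y hy => prod_identity hy
  have hg' : HasDerivAt (fun y => Bfun y * Bfun (y+1/2)) (-(Real.pi / x^2)) x :=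
    hg.congr_of_eventuallyEq hev
  exact hprod.unique hg'


lemma mul_lb {w1 w2 r1 r2 d l c₀ dd lg : ℝ} (hw1 : 1 ≤ w1) (hw2 : 1 ≤ w2)
    (hc₀ : 0 < c₀) (hr1 : c₀ ≤ r1) (hr2 : c₀ ≤ r2) (hdd : 0 < dd) (hd : dd ≤ d)
    (hlg : 0 < lg) (hl : lg ≤ l) :
    (1:ℝ)/2 * ((1*1) * (c₀*c₀) * (dd*lg)) ≤ 1/2 * (w1*w2 * (r1*r2) * (d*l)) := by
  have h1 : c₀*c₀ ≤ r1*r2 := mul_le_mul hr1 hr2 hc₀.le (hc₀.le.trans hr1)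
  have h2 : dd*lg ≤ d*l := mul_le_mul hd hl hlg.le (hdd.le.trans hd)
  have h3 : (c₀*c₀)*(dd*lg) ≤ (r1*r2)*(d*l) :=
    mul_le_mul h1 h2 (by positivity) ((mul_pos hc₀ hc₀).le.trans h1)
  have h4 : 1 ≤ w1*w2 := by nlinarith
  have h5 : (r1*r2)*(d*l) ≤ (w1*w2)*((r1*r2)*(d*l)) :=
    le_mul_of_one_le_left ((by positivity : (0:ℝ) ≤ (c₀*c₀)*(dd*lg)).trans h3) h4
  calc (1:ℝ)/2 * ((1*1) * (c₀*c₀) * (dd*lg)) = 1/2 * ((c₀*c₀)*(dd*lg)) := by ring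
    _ ≤ 1/2 * ((w1*w2)*((r1*r2)*(d*l))) := by linarith
    _ = 1/2 * (w1*w2 * (r1*r2) * (d*l)) := by ring

lemma correlation {x : ℝ} (hx : 0 < x) :
    Lfun x * Bfun (x+1/2) < Lfun (x+1/2) * Bfun x := by
  set μ : Measure ℝ := volume.restrict (Ioc (0:ℝ) 1) with hμ
  set a : ℝ → ℝ := fun t => t ^ (x-1) * wfun t with ha_def
  set a' : ℝ → ℝ := fun t => t ^ (x+1/2-1) * wfun t with ha'_def
  set l : ℝ → ℝ := fun t => t ^ (x-1) * wfun t * Real.log t with hl_def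
  set l' : ℝ → ℝ := fun t => t ^ (x+1/2-1) * wfun t * Real.log t with hl'_def
  have ha : Integrable a μ := base_int hx
  have ha' : Integrable a' μ := base_int (by linarith)
  have hl : Integrable l μ := log_int hx
  have hl' : Integrable l' μ := log_int (by linarith)
  set G : ℝ × ℝ → ℝ :=
    fun p => (1/2) * ((l' p.1 * a p.2 - l p.1 * a' p.2) + (a p.1 * l' p.2 - a' p.1 * l p.2))
    with hG_def
  have i1 : Integrable (fun p : ℝ × ℝ => l' p.1 * a p.2) (μ.prod μ) := hl'.mul_prod ha
  have i2 : Integrable (fun p : ℝ × ℝ => l p.1 * a' p.2) (μ.prod μ) := hl.mul_prod ha'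
  have i3 : Integrable (fun p : ℝ × ℝ => a p.1 * l' p.2) (μ.prod μ) := ha.mul_prod hl'
  have i4 : Integrable (fun p : ℝ × ℝ => a' p.1 * l p.2) (μ.prod μ) := ha'.mul_prod hl
  have hGint : Integrable G (μ.prod μ) := (((i1.sub i2).add (i3.sub i4)).const_mul _)
  -- value of the integral of G
  have hGval : ∫ p, G p ∂(μ.prod μ) = Lfun (x+1/2) * Bfun x - Lfun x * Bfun (x+1/2) := by
    rw [hG_def]
    have i12 : Integrable (fun p : ℝ × ℝ => l' p.1 * a p.2 - l p.1 * a' p.2) (μ.prod μ) :=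
      i1.sub i2
    have i34 : Integrable (fun p : ℝ × ℝ => a p.1 * l' p.2 - a' p.1 * l p.2) (μ.prod μ) :=
      i3.sub i4
    rw [integral_const_mul, integral_add i12 i34, integral_sub i1 i2,
      integral_sub i3 i4, integral_prod_mul, integral_prod_mul, integral_prod_mul,
      integral_prod_mul]
    have e1 : ∫ t, l' t ∂μ = Lfun (x+1/2) := rfl
    have e2 : ∫ t, a t ∂μ = Bfun x := rfl
    have e3 : ∫ t, l t ∂μ = Lfun x := rfl
    have e4 : ∫ t, a' t ∂μ = Bfun (x+1/2) := rfl
    rw [e1, e2, e3, e4]; ring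
  -- pointwise formula
  have hpt : ∀ t s : ℝ, 0 < t → 0 < s →
      G (t, s) = (1/2) * ((wfun t * wfun s) * (t ^ (x-1) * s ^ (x-1)) *
        ((t ^ ((1:ℝ)/2) - s ^ ((1:ℝ)/2)) * (Real.log t - Real.log s))) := by
    intro t s ht hs
    simp only [hG_def, hl_def, hl'_def, ha_def, ha'_def]
    rw [show x + 1/2 - 1 = (x-1) + 1/2 by ring, Real.rpow_add ht, Real.rpow_add hs]
    ring
  -- nonnegativity a.e.
  have hnn : ∀ t s : ℝ, t ∈ Ioc (0:ℝ) 1 → s ∈ Ioc (0:ℝ) 1 → 0 ≤ G (t, s) := by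
    intro t s ht hs
    rw [hpt t s ht.1 hs.1]
    have h1 : 0 ≤ wfun t * wfun s := mul_nonneg (wfun_nonneg ht.2) (wfun_nonneg hs.2)
    have h2 : 0 ≤ t ^ (x-1) * s ^ (x-1) :=
      mul_nonneg (Real.rpow_nonneg ht.1.le _) (Real.rpow_nonneg hs.1.le _)
    have h3 : 0 ≤ (t ^ ((1:ℝ)/2) - s ^ ((1:ℝ)/2)) * (Real.log t - Real.log s) := by
      rcases le_total s t with h | h
      · apply mul_nonneg
        · have := Real.rpow_le_rpow hs.1.le h (by norm_num : (0:ℝ) ≤ 1/2); linarith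
        · have := Real.log_le_log hs.1 h; linarith
      · have h1 : t ^ ((1:ℝ)/2) - s ^ ((1:ℝ)/2) ≤ 0 := by
          have := Real.rpow_le_rpow ht.1.le h (by norm_num : (0:ℝ) ≤ 1/2); linarith
        have h2 : Real.log t - Real.log s ≤ 0 := by
          have := Real.log_le_log ht.1 h; linarith
        nlinarith [mul_nonneg (neg_nonneg.2 h1) (neg_nonneg.2 h2)]
    positivity
  have hae : 0 ≤ᵐ[μ.prod μ] G := by
    rw [hμ, Measure.prod_restrict]
    have h : ∀ᵐ p ∂((volume.prod volume).restrict (Ioc (0:ℝ) 1 ×ˢ Ioc (0:ℝ) 1)), 0 ≤ G p := by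
      rw [ae_restrict_iff' (measurableSet_Ioc.prod measurableSet_Ioc)]
      exact ae_of_all _ fun p hp => hnn p.1 p.2 hp.1 hp.2
    exact h.mono fun p hp => hp
  -- lower bound on a box
  set S : Set (ℝ × ℝ) := Ioc (1/2:ℝ) (3/4) ×ˢ Ioc (1/8:ℝ) (1/4) with hS_def
  set c₀ : ℝ := min ((1/8:ℝ) ^ (x-1)) 1 with hc₀
  have hc₀pos : 0 < c₀ := lt_min (Real.rpow_pos_of_pos (by norm_num) _) one_pos
  have hc₀le : ∀ t : ℝ, 1/8 ≤ t → t ≤ 1 → c₀ ≤ t ^ (x-1) := by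
    intro t h1 h2
    rcases le_or_gt 1 x with h | h
    · exact le_trans (min_le_left _ _) (Real.rpow_le_rpow (by norm_num) h1 (by linarith))
    · refine le_trans (min_le_right _ _) ?_
      exact Real.one_le_rpow_of_pos_of_le_one_of_nonpos (by linarith) h2 (by linarith)
  set dd : ℝ := (1/2:ℝ) ^ ((1:ℝ)/2) - (1/4:ℝ) ^ ((1:ℝ)/2) with hdd
  have hddpos : 0 < dd := by
    have := Real.rpow_lt_rpow (by norm_num : (0:ℝ) ≤ 1/4) (by norm_num : (1/4:ℝ) < 1/2)
      (by norm_num : (0:ℝ) < 1/2)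
    simp only [hdd]; linarith
  set m : ℝ := (1/2) * ((1 * 1) * (c₀ * c₀) * (dd * Real.log 2)) with hm
  have hmpos : 0 < m := by
    have h2 : (0:ℝ) < Real.log 2 := Real.log_pos (by norm_num)
    positivity
  have hlb : ∀ p ∈ S, m ≤ G p := by
    rintro ⟨t, s⟩ hp
    obtain ⟨ht, hs⟩ := hp
    simp only [mem_Ioc] at ht hs
    have ht0 : (0:ℝ) < t := by linarith [ht.1]
    have hs0 : (0:ℝ) < s := by linarith [hs.1]
    rw [hpt t s ht0 hs0, hm]
    have hw1 : 1 ≤ wfun t := wfun_one_le ht0.le (by linarith [ht.2])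
    have hw2 : 1 ≤ wfun s := wfun_one_le hs0.le (by linarith [hs.2])
    have hr1 : c₀ ≤ t ^ (x-1) := hc₀le t (by linarith [ht.1]) (by linarith [ht.2])
    have hr2 : c₀ ≤ s ^ (x-1) := hc₀le s (by linarith [hs.1]) (by linarith [hs.2])
    have hd : dd ≤ t ^ ((1:ℝ)/2) - s ^ ((1:ℝ)/2) := by
      have h1 : ((1/2:ℝ)) ^ ((1:ℝ)/2) ≤ t ^ ((1:ℝ)/2) :=
        Real.rpow_le_rpow (by norm_num) ht.1.le (by norm_num)
      have h2 : s ^ ((1:ℝ)/2) ≤ ((1/4:ℝ)) ^ ((1:ℝ)/2) :=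
        Real.rpow_le_rpow hs0.le hs.2 (by norm_num)
      simp only [hdd]; linarith
    have hl2 : Real.log 2 ≤ Real.log t - Real.log s := by
      have h1 : Real.log (1/2) ≤ Real.log t := Real.log_le_log (by norm_num) ht.1.le
      have h2 : Real.log s ≤ Real.log (1/4) := Real.log_le_log hs0 hs.2
      have e1 : Real.log (1/2:ℝ) = -Real.log 2 := by
        rw [one_div, Real.log_inv]
      have e2 : Real.log (1/4:ℝ) = -(2 * Real.log 2) := by
        rw [one_div, Real.log_inv, show (4:ℝ) = 2^2 by norm_num, Real.log_pow]
        push_cast; ring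
      linarith
    have hlog2 : (0:ℝ) < Real.log 2 := Real.log_pos (by norm_num)
    exact mul_lb hw1 hw2 hc₀pos hr1 hr2 hddpos hd hlog2 hl2
  -- put it together
  have hSmeas : MeasurableSet S := measurableSet_Ioc.prod measurableSet_Ioc
  have hSvol : (μ.prod μ) S = ENNReal.ofReal (1/4) * ENNReal.ofReal (1/8) := by
    rw [hS_def, Measure.prod_prod, hμ, Measure.restrict_apply measurableSet_Ioc,
      Measure.restrict_apply measurableSet_Ioc,
      show Ioc (1/2:ℝ) (3/4) ∩ Ioc 0 1 = Ioc (1/2:ℝ) (3/4) by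
        rw [inter_eq_left]; exact Ioc_subset_Ioc (by norm_num) (by norm_num),
      show Ioc (1/8:ℝ) (1/4) ∩ Ioc 0 1 = Ioc (1/8:ℝ) (1/4) by
        rw [inter_eq_left]; exact Ioc_subset_Ioc (by norm_num) (by norm_num),
      Real.volume_Ioc, Real.volume_Ioc]
    norm_num
  have hSne : (μ.prod μ) S ≠ ⊤ := by
    rw [hSvol]
    exact ENNReal.mul_ne_top ENNReal.ofReal_ne_top ENNReal.ofReal_ne_top
  have hstep1 : m * ((μ.prod μ) S).toReal ≤ ∫ p in S, G p ∂(μ.prod μ) :=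
    setIntegral_ge_of_const_le_real hSmeas hSne hlb hGint.integrableOn
  have hstep2 : ∫ p in S, G p ∂(μ.prod μ) ≤ ∫ p, G p ∂(μ.prod μ) :=
    setIntegral_le_integral hGint hae
  have htoReal : 0 < ((μ.prod μ) S).toReal := by
    rw [hSvol]
    rw [ENNReal.toReal_mul, ENNReal.toReal_ofReal (by norm_num), ENNReal.toReal_ofReal (by norm_num)]
    norm_num
  have : 0 < ∫ p, G p ∂(μ.prod μ) :=
    lt_of_lt_of_le (mul_pos hmpos htoReal) (le_trans hstep1 hstep2)
  rw [hGval] at this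
  linarith


theorem beta_deriv_bounds (b : ℝ) (hb : 0 < b) :
    -(1 / (2*b)) * betaReal (b + 1/2) (1/2)
        < deriv (fun x : ℝ => betaReal x (1/2)) (b + 1/2) ∧
      deriv (fun x : ℝ => betaReal x (1/2)) (b + 1/2)
        < -(1 / (2*b + 1)) * betaReal (b + 1/2) (1/2) := by
  have hx1 : (0:ℝ) < b + 1/2 := by linarith
  rw [deriv_beta hx1, betaReal_eq]
  constructor
  · -- lower bound, use x = b
    have hsum := sum_identity hb
    have hcor := correlation hb
    rw [mul_comm (Bfun b) (Lfun (b+1/2))] at hsum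
    have hv : -(Real.pi/b^2)/2 < Lfun (b+1/2) * Bfun b := by linarith
    have hLHS : (-(1/(2*b)) * Bfun (b+1/2)) * Bfun b = -(Real.pi/b^2)/2 := by
      rw [mul_assoc, mul_comm (Bfun (b+1/2)), prod_identity hb]
      rw [neg_mul, neg_div, neg_inj, div_mul_div_comm, one_mul, div_div]
      congr 1
      ring
    have hmul : (-(1/(2*b)) * Bfun (b+1/2)) * Bfun b < Lfun (b+1/2) * Bfun b := by
      rw [hLHS]; exact hv
    exact lt_of_mul_lt_mul_right hmul (Bfun_pos hb).le
  · -- upper bound, use x = b + 1/2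
    have hsum := sum_identity hx1
    have hcor := correlation hx1
    rw [mul_comm (Bfun (b+1/2)) (Lfun (b+1/2+1/2))] at hsum
    have hu : Lfun (b+1/2) * Bfun (b+1/2+1/2) < -(Real.pi/(b+1/2)^2)/2 := by linarith
    have hRHS : (-(1/(2*b+1)) * Bfun (b+1/2)) * Bfun (b+1/2+1/2)
        = -(Real.pi/(b+1/2)^2)/2 := by
      rw [mul_assoc, prod_identity hx1]
      have h1 : (2*b+1) ≠ 0 := by positivity
      have h2 : (b+1/2) ≠ 0 := by positivity
      field_simp
    have hmul : Lfun (b+1/2) * Bfun (b+1/2+1/2)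
        < (-(1/(2*b+1)) * Bfun (b+1/2)) * Bfun (b+1/2+1/2) := by
      rw [hRHS]; exact hu
    exact lt_of_mul_lt_mul_right hmul (Bfun_pos (by linarith)).le
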